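/- Projection distance formula: with the notation of the product formula, define Proj_V(w) = [v₁∨⋯∨v_{p-1}∨w] in the projective space of the p-th exterior power of E, equipped with the angular metric d induced by the Grassmann extension of the inner product. Then for w₁, w₂ not in span(V), d(Proj_V(w₁), Proj_V(w₂)) = (τ(V, w₁∨w₂)/(τ(V,w₁)·τ(V,w₂))) · d([w₁],[w₂]), where τ(U,W) = ‖U∨W‖/(‖U‖·‖W‖). -/

import Mathlib

open scoped InnerProductSpace ComplexConjugate ComplexOrder Matrix

/-- Gram pairing determinant of two tuples of vectors. -/
noncomputable def gramPairing {E : Type*} [NormedAddCommGroup E]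
    [InnerProductSpace ℂ E] {m : Type*} [Fintype m] [DecidableEq m]
    (a b : m → E) : ℂ :=
  Matrix.det (Matrix.of fun i j => ⟪a i, b j⟫_ℂ)

section Aux
variable {E : Type*} [NormedAddCommGroup E] [InnerProductSpace ℂ E]

lemma gram_posDef {m : ℕ} (v : Fin m → E) (hv : LinearIndependent ℂ v) :
    Matrix.PosDef (Matrix.of fun i j => ⟪v i, v j⟫_ℂ) := by
  refine Matrix.PosDef.of_dotProduct_mulVec_pos ?_ ?_
  · ext i j
    simp [Matrix.conjTranspose_apply, inner_conj_symm]
  · intro x hx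
    have hy : (∑ i, x i • v i) ≠ 0 := by
      intro h
      exact hx (funext fun i => Fintype.linearIndependent_iff.mp hv x h i)
    have key : star x ⬝ᵥ ((Matrix.of fun i j => ⟪v i, v j⟫_ℂ) *ᵥ x)
        = ⟪∑ i, x i • v i, ∑ j, x j • v j⟫_ℂ := by
      simp only [dotProduct, Matrix.mulVec, Matrix.of_apply, Pi.star_apply,
        sum_inner, inner_sum, inner_smul_left, inner_smul_right, Finset.mul_sum]
      rw [Finset.sum_comm]
      exact Finset.sum_congr rfl fun i _ => Finset.sum_congr rfl fun j _ => by rw [starRingEnd_apply]; ring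
    rw [key, RCLike.pos_iff]
    refine ⟨?_, inner_self_im _⟩
    rw [inner_self_eq_norm_mul_norm]
    exact mul_pos (norm_pos_iff.mpr hy) (norm_pos_iff.mpr hy)

lemma gram_block {m : ℕ} (v : Fin m → E) {k : ℕ} (a b ua ub : Fin k → E)
    (ca cb : Fin k → Fin m → ℂ)
    (ha : ∀ i, a i = ua i + ∑ t, ca i t • v t)
    (hb : ∀ i, b i = ub i + ∑ t, cb i t • v t)
    (hua : ∀ i j, ⟪ua i, v j⟫_ℂ = 0)
    (hub : ∀ i j, ⟪v j, ub i⟫_ℂ = 0) :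
    gramPairing (Sum.elim v a) (Sum.elim v b)
      = gramPairing v v * Matrix.det (Matrix.of fun i j => ⟪ua i, ub j⟫_ℂ) := by
  classical
  set A : Matrix (Fin m) (Fin m) ℂ := Matrix.of fun i j => ⟪v i, v j⟫_ℂ with hA
  set D : Matrix (Fin k) (Fin k) ℂ := Matrix.of fun i j => ⟪ua i, ub j⟫_ℂ with hD
  set Ca : Matrix (Fin k) (Fin m) ℂ := Matrix.of fun i t => (starRingEnd ℂ) (ca i t) with hCa
  set Cb : Matrix (Fin m) (Fin k) ℂ := Matrix.of fun t i => cb i t with hCb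
  have hM : (Matrix.of fun i j => ⟪Sum.elim v a i, Sum.elim v b j⟫_ℂ)
      = Matrix.fromBlocks 1 0 Ca 1 *
          (Matrix.fromBlocks A 0 0 D * Matrix.fromBlocks 1 Cb 0 1) := by
    rw [Matrix.fromBlocks_multiply, Matrix.fromBlocks_multiply]
    ext i j
    rcases i with i | i <;> rcases j with j | j
    · simp [hA]
    · -- ⟪v i, b j⟫ = (A * Cb) entry
      simp only [Matrix.of_apply, Sum.elim_inl, Sum.elim_inr, Matrix.fromBlocks_apply₁₂,
        Matrix.mul_apply, Matrix.one_apply, Matrix.zero_apply, hb, inner_add_right,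
        inner_sum, inner_smul_right, hub]
      simp [hA, hCb, Matrix.mul_apply, mul_comm]
    · simp only [Matrix.of_apply, Sum.elim_inl, Sum.elim_inr, Matrix.fromBlocks_apply₂₁,
        Matrix.mul_apply, ha, sum_inner, inner_add_left, inner_smul_left, hua]
      simp [hA, hCa, Matrix.mul_apply]
    · simp only [Matrix.of_apply, Sum.elim_inr, Matrix.fromBlocks_apply₂₂, Matrix.add_apply,
        Matrix.mul_apply, ha, hb, inner_add_left, inner_add_right, inner_sum, sum_inner,
        inner_smul_left, inner_smul_right, hua, hub, hA, hCa, hCb, hD,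
        Matrix.one_apply, Matrix.zero_apply, mul_zero, zero_mul, Finset.sum_const_zero,
        add_zero, zero_add, mul_ite, mul_one, ite_mul, one_mul,
        Finset.sum_ite_eq, Finset.sum_ite_eq', Finset.mem_univ, if_true, Finset.mul_sum]
      rw [add_comm]
      congr 1
      rw [Finset.sum_comm]
      exact Finset.sum_congr rfl fun s _ => Finset.sum_congr rfl fun t _ => by ring
  unfold gramPairing
  rw [hM, Matrix.det_mul, Matrix.det_mul, Matrix.det_fromBlocks_zero₁₂,
    Matrix.det_fromBlocks_zero₂₁, Matrix.det_fromBlocks_zero₂₁]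
  simp [hA, hD]

lemma calc_lemma (g r s n S W₁ W₂ : ℝ) (hg : 0 < g) (hr : 0 < r) (hs : 0 < s)
    (hW₁ : 0 < W₁) (hW₂ : 0 < W₂) (hcs : n^2 ≤ r*s) (hS : 0 ≤ S)
    (hS0 : S = 0 → n^2 = r*s) :
    Real.sqrt (1 - (g*n)^2 / ((g*r)*(g*s)))
      = (Real.sqrt (g*(r*s - n^2)) / (Real.sqrt g * Real.sqrt S)) /
          ((Real.sqrt (g*r) / (Real.sqrt g * W₁)) * (Real.sqrt (g*s) / (Real.sqrt g * W₂))) *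
        (Real.sqrt S / (W₁*W₂)) := by
  have hg' := hg.ne'
  have hr' := hr.ne'
  have hs' := hs.ne'
  have h1 : 1 - (g*n)^2 / ((g*r)*(g*s)) = (r*s - n^2) / (r*s) := by
    field_simp
  rw [h1, Real.sqrt_div (by nlinarith : (0:ℝ) ≤ r*s - n^2), Real.sqrt_mul hg.le,
    Real.sqrt_mul hg.le, Real.sqrt_mul hg.le, Real.sqrt_mul hr.le]
  have hsg : 0 < Real.sqrt g := Real.sqrt_pos.mpr hg
  have hsr : 0 < Real.sqrt r := Real.sqrt_pos.mpr hr
  have hss : 0 < Real.sqrt s := Real.sqrt_pos.mpr hs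
  by_cases hS' : S = 0
  · have h0 : r*s - n^2 = 0 := by rw [hS0 hS']; ring
    rw [hS', h0]
    simp
  · have hSpos : 0 < Real.sqrt S := Real.sqrt_pos.mpr (lt_of_le_of_ne hS (Ne.symm hS'))
    have h2 := hsg.ne'
    have h3 := hsr.ne'
    have h4 := hss.ne'
    have h5 := hSpos.ne'
    have h6 := hW₁.ne'
    have h7 := hW₂.ne'
    field_simp

end Aux

theorem projection_distance_formula {E : Type*} [NormedAddCommGroup E]
    [InnerProductSpace ℂ E] [FiniteDimensional ℂ E] {m : ℕ}
    (v : Fin m → E) (hv : LinearIndependent ℂ v) (w₁ w₂ : E)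
    (hw₁ : w₁ ∉ Submodule.span ℂ (Set.range v))
    (hw₂ : w₂ ∉ Submodule.span ℂ (Set.range v)) :
    Real.sqrt (1 -
        ‖gramPairing (Sum.elim v ![w₁]) (Sum.elim v ![w₂])‖ ^ 2 /
          ((gramPairing (Sum.elim v ![w₁]) (Sum.elim v ![w₁])).re *
            (gramPairing (Sum.elim v ![w₂]) (Sum.elim v ![w₂])).re)) =
      (Real.sqrt (gramPairing (Sum.elim v ![w₁, w₂]) (Sum.elim v ![w₁, w₂])).re /
          (Real.sqrt (gramPairing v v).re *
            Real.sqrt (gramPairing ![w₁, w₂] ![w₁, w₂]).re)) /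
        ((Real.sqrt (gramPairing (Sum.elim v ![w₁]) (Sum.elim v ![w₁])).re /
            (Real.sqrt (gramPairing v v).re * ‖w₁‖)) *
          (Real.sqrt (gramPairing (Sum.elim v ![w₂]) (Sum.elim v ![w₂])).re /
            (Real.sqrt (gramPairing v v).re * ‖w₂‖))) *
        (Real.sqrt (gramPairing ![w₁, w₂] ![w₁, w₂]).re / (‖w₁‖ * ‖w₂‖)) := by
  classical
  set K := Submodule.span ℂ (Set.range v) with hK
  set u₁ := w₁ - (K.starProjection w₁ : E) with hu₁
  set u₂ := w₂ - (K.starProjection w₂ : E) with hu₂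
  have hdec : ∀ w : E, ∃ c : Fin m → ℂ,
      w = (w - (K.starProjection w : E)) + ∑ t, c t • v t := by
    intro w
    obtain ⟨c, hc⟩ := Submodule.mem_span_range_iff_exists_fun ℂ |>.mp (K.starProjection_apply_mem w)
    exact ⟨c, by rw [hc]; abel⟩
  obtain ⟨c₁, hc₁⟩ := hdec w₁
  obtain ⟨c₂, hc₂⟩ := hdec w₂
  have hmemo : ∀ w : E, (w - (K.starProjection w : E)) ∈ Kᗮ := fun w =>
    Submodule.sub_starProjection_mem_orthogonal w
  have horthr : ∀ (u : E), u ∈ Kᗮ → ∀ j, ⟪v j, u⟫_ℂ = 0 := fun u hu j =>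
    hu (v j) (Submodule.subset_span (Set.mem_range_self j))
  have horthl : ∀ (u : E), u ∈ Kᗮ → ∀ j, ⟪u, v j⟫_ℂ = 0 := fun u hu j => by
    rw [← inner_conj_symm, horthr u hu j, map_zero]
  have hu₁ne : u₁ ≠ 0 := by
    intro h
    exact hw₁ (by rw [show w₁ = (K.starProjection w₁ : E) from by
      have := sub_eq_zero.mp h; exact this]; exact (K.starProjection_apply_mem w₁))
  have hu₂ne : u₂ ≠ 0 := by
    intro h
    exact hw₂ (by rw [show w₂ = (K.starProjection w₂ : E) from by
      have := sub_eq_zero.mp h; exact this]; exact (K.starProjection_apply_mem w₂))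
  have hw₁ne : w₁ ≠ 0 := fun h => hw₁ (h ▸ Submodule.zero_mem K)
  have hw₂ne : w₂ ≠ 0 := fun h => hw₂ (h ▸ Submodule.zero_mem K)
  -- Gram determinant of v
  have hGpos₀ : (0:ℂ) < gramPairing v v := (gram_posDef v hv).det_pos
  have hGpos : 0 < (gramPairing v v).re := (RCLike.pos_iff.mp hGpos₀).1
  have hGim : (gramPairing v v).im = 0 := (RCLike.pos_iff.mp hGpos₀).2
  set g := (gramPairing v v).re with hg
  have hGc : gramPairing v v = (g : ℂ) := Complex.ext (by simp [hg]) (by simp [hGim])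
  set r := ‖u₁‖^2 with hrdef
  set s := ‖u₂‖^2 with hsdef
  set t := ⟪u₁, u₂⟫_ℂ with htdef
  set n := ‖t‖ with hndef
  have hr₁ : ⟪u₁, u₁⟫_ℂ = ((r : ℝ) : ℂ) := by
    rw [@inner_self_eq_norm_sq_to_K ℂ]; norm_cast
  have hs₂ : ⟪u₂, u₂⟫_ℂ = ((s : ℝ) : ℂ) := by
    rw [@inner_self_eq_norm_sq_to_K ℂ]; norm_cast
  have htconj : ⟪u₂, u₁⟫_ℂ = (starRingEnd ℂ) t := by rw [htdef, inner_conj_symm]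
  have htt : t * (starRingEnd ℂ) t = ((n^2 : ℝ) : ℂ) := by
    rw [Complex.mul_conj, Complex.normSq_eq_norm_sq, hndef]
  -- hypotheses packs for gram_block
  have ha1 : ∀ i : Fin 1, ![w₁] i = ![u₁] i + ∑ τ, ![c₁] i τ • v τ := by
    intro i; fin_cases i; simpa using hc₁
  have ha2 : ∀ i : Fin 1, ![w₂] i = ![u₂] i + ∑ τ, ![c₂] i τ • v τ := by
    intro i; fin_cases i; simpa using hc₂
  have ha12 : ∀ i : Fin 2, ![w₁, w₂] i = ![u₁, u₂] i + ∑ τ, ![c₁, c₂] i τ • v τ := by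
    intro i; fin_cases i
    · simpa using hc₁
    · simpa using hc₂
  have hol1 : ∀ (i : Fin 1) j, ⟪![u₁] i, v j⟫_ℂ = 0 := by
    intro i j; fin_cases i; simpa [hu₁, hu₂] using horthl _ (hmemo w₁) j
  have hol2 : ∀ (i : Fin 1) j, ⟪![u₂] i, v j⟫_ℂ = 0 := by
    intro i j; fin_cases i; simpa [hu₁, hu₂] using horthl _ (hmemo w₂) j
  have hor1 : ∀ (i : Fin 1) j, ⟪v j, ![u₁] i⟫_ℂ = 0 := by
    intro i j; fin_cases i; simpa [hu₁, hu₂] using horthr _ (hmemo w₁) j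
  have hor2 : ∀ (i : Fin 1) j, ⟪v j, ![u₂] i⟫_ℂ = 0 := by
    intro i j; fin_cases i; simpa [hu₁, hu₂] using horthr _ (hmemo w₂) j
  have hol12 : ∀ (i : Fin 2) j, ⟪![u₁, u₂] i, v j⟫_ℂ = 0 := by
    intro i j; fin_cases i
    · simpa [hu₁, hu₂] using horthl _ (hmemo w₁) j
    · simpa [hu₁, hu₂] using horthl _ (hmemo w₂) j
  have hor12 : ∀ (i : Fin 2) j, ⟪v j, ![u₁, u₂] i⟫_ℂ = 0 := by
    intro i j; fin_cases i
    · simpa [hu₁, hu₂] using horthr _ (hmemo w₁) j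
    · simpa [hu₁, hu₂] using horthr _ (hmemo w₂) j
  -- the four Gram computations
  have e11 : gramPairing (Sum.elim v ![w₁]) (Sum.elim v ![w₁]) = ((g * r : ℝ) : ℂ) := by
    rw [gram_block v ![w₁] ![w₁] ![u₁] ![u₁] ![c₁] ![c₁] ha1 ha1 hol1 hor1, hGc]
    simp [Matrix.det_fin_one, hr₁, hrdef]
  have e22 : gramPairing (Sum.elim v ![w₂]) (Sum.elim v ![w₂]) = ((g * s : ℝ) : ℂ) := by
    rw [gram_block v ![w₂] ![w₂] ![u₂] ![u₂] ![c₂] ![c₂] ha2 ha2 hol2 hor2, hGc]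
    simp [Matrix.det_fin_one, hs₂, hsdef]
  have e12 : gramPairing (Sum.elim v ![w₁]) (Sum.elim v ![w₂]) = ((g:ℝ) : ℂ) * t := by
    rw [gram_block v ![w₁] ![w₂] ![u₁] ![u₂] ![c₁] ![c₂] ha1 ha2 hol1 hor2, hGc]
    simp [Matrix.det_fin_one, htdef]
  have e1212 : gramPairing (Sum.elim v ![w₁, w₂]) (Sum.elim v ![w₁, w₂])
      = ((g * (r * s - n^2) : ℝ) : ℂ) := by
    rw [gram_block v ![w₁, w₂] ![w₁, w₂] ![u₁, u₂] ![u₁, u₂] ![c₁, c₂] ![c₁, c₂]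
      ha12 ha12 hol12 hor12, hGc, Matrix.det_fin_two]
    simp only [Matrix.of_apply, Matrix.cons_val', Matrix.cons_val_zero, Matrix.cons_val_one,
      Matrix.head_cons, Matrix.empty_val', Matrix.cons_val_fin_one, Matrix.head_fin_const]
    rw [hr₁, hs₂, htconj, ← htdef, htt]
    push_cast; ring
  have eS : gramPairing ![w₁, w₂] ![w₁, w₂]
      = ((‖w₁‖^2 * ‖w₂‖^2 - ‖⟪w₁, w₂⟫_ℂ‖^2 : ℝ) : ℂ) := by
    unfold gramPairing
    rw [Matrix.det_fin_two]
    simp only [Matrix.of_apply, Matrix.cons_val', Matrix.cons_val_zero, Matrix.cons_val_one,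
      Matrix.head_cons, Matrix.empty_val', Matrix.cons_val_fin_one, Matrix.head_fin_const]
    rw [@inner_self_eq_norm_sq_to_K ℂ, @inner_self_eq_norm_sq_to_K ℂ,
      ← inner_conj_symm w₂ w₁, Complex.mul_conj, Complex.normSq_eq_norm_sq]
    norm_cast
    exact (Complex.ofReal_sub _ _).symm
  -- real parts
  have E11 : (gramPairing (Sum.elim v ![w₁]) (Sum.elim v ![w₁])).re = g * r := by
    rw [e11, Complex.ofReal_re]
  have E22 : (gramPairing (Sum.elim v ![w₂]) (Sum.elim v ![w₂])).re = g * s := by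
    rw [e22, Complex.ofReal_re]
  have E1212 : (gramPairing (Sum.elim v ![w₁, w₂]) (Sum.elim v ![w₁, w₂])).re
      = g * (r * s - n^2) := by rw [e1212, Complex.ofReal_re]
  have ES : (gramPairing ![w₁, w₂] ![w₁, w₂]).re
      = ‖w₁‖^2 * ‖w₂‖^2 - ‖⟪w₁, w₂⟫_ℂ‖^2 := by rw [eS, Complex.ofReal_re]
  have EN : ‖gramPairing (Sum.elim v ![w₁]) (Sum.elim v ![w₂])‖ = g * n := by
    rw [e12, norm_mul, hndef, Complex.norm_real, Real.norm_eq_abs, abs_of_pos hGpos]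
  have hrpos : 0 < r := by rw [hrdef]; exact pow_pos (norm_pos_iff.mpr hu₁ne) 2
  have hspos : 0 < s := by rw [hsdef]; exact pow_pos (norm_pos_iff.mpr hu₂ne) 2
  have hW₁ : 0 < ‖w₁‖ := norm_pos_iff.mpr hw₁ne
  have hW₂ : 0 < ‖w₂‖ := norm_pos_iff.mpr hw₂ne
  have hcs : n^2 ≤ r * s := by
    have h := norm_inner_le_norm (𝕜 := ℂ) u₁ u₂
    rw [← htdef, ← hndef] at h
    have h2 : n^2 ≤ (‖u₁‖ * ‖u₂‖)^2 := pow_le_pow_left₀ (norm_nonneg t) h 2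
    calc n^2 ≤ (‖u₁‖ * ‖u₂‖)^2 := h2
      _ = r * s := by rw [mul_pow, hrdef, hsdef]
  have hSnn : 0 ≤ ‖w₁‖^2 * ‖w₂‖^2 - ‖⟪w₁, w₂⟫_ℂ‖^2 := by
    have h2 : ‖⟪w₁, w₂⟫_ℂ‖^2 ≤ (‖w₁‖ * ‖w₂‖)^2 :=
      pow_le_pow_left₀ (norm_nonneg _) (norm_inner_le_norm (𝕜 := ℂ) w₁ w₂) 2
    rw [mul_pow] at h2
    linarith
  have hS0 : ‖w₁‖^2 * ‖w₂‖^2 - ‖⟪w₁, w₂⟫_ℂ‖^2 = 0 → n^2 = r * s := by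
    intro h
    have heq : ‖⟪w₁, w₂⟫_ℂ‖ = ‖w₁‖ * ‖w₂‖ := by
      have h' : ‖⟪w₁, w₂⟫_ℂ‖^2 = (‖w₁‖ * ‖w₂‖)^2 := by rw [mul_pow]; linarith
      calc ‖⟪w₁, w₂⟫_ℂ‖ = Real.sqrt (‖⟪w₁, w₂⟫_ℂ‖^2) := (Real.sqrt_sq (norm_nonneg _)).symm
        _ = Real.sqrt ((‖w₁‖ * ‖w₂‖)^2) := by rw [h']
        _ = ‖w₁‖ * ‖w₂‖ := Real.sqrt_sq (by positivity)
    obtain ⟨lam, hlam0, hlam⟩ := (norm_inner_eq_norm_iff hw₁ne hw₂ne).mp heq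
    have hu2 : u₂ = lam • u₁ := by
      rw [hu₂, hu₁, hlam, map_smul]
      rw [smul_sub]
    have h1 : n = ‖lam‖ * r := by
      rw [hndef, htdef, hu2, inner_smul_right, norm_mul, hr₁, Complex.norm_real,
        Real.norm_eq_abs, abs_of_nonneg (by positivity : (0:ℝ) ≤ r)]
    have h2 : s = ‖lam‖^2 * r := by
      have : s = ‖lam • u₁‖^2 := by rw [hsdef, hu2]
      rw [this, norm_smul, mul_pow, hrdef]
    rw [h1, h2]; ring
  rw [EN, E11, E22, E1212, ES]
  exact calc_lemma g r s n _ ‖w₁‖ ‖w₂‖ hGpos hrpos hspos hW₁ hW₂ hcs hSnn hS0
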